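/- For α ∈ [1,2], let M_α = inf{ n ≥ 0 : 1/2 < S_α^n(1) < α - 1/2 } + 1. Then for all k < M_α one has S_α^k(1-α) = S_α^k(1) - α. -/
import Mathlib


/-- The symmetric doubling map `S_α`. -/
noncomputable def symDoubling (α : ℝ) (x : ℝ) : ℝ :=
  if x < -(1/2) then 2*x + α else if x ≤ 1/2 then 2*x else 2*x - α

/-- The condition `1/2 < S_α^n(1) < α - 1/2` defining the matching index:
`M_α = inf {n | matchCond α n} + 1`. -/
noncomputable def matchCond (α : ℝ) (n : ℕ) : Prop :=
  1/2 < (symDoubling α)^[n] 1 ∧ (symDoubling α)^[n] 1 < α - 1/2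

lemma symDoubling_key (α : ℝ) (hα : α ∈ Set.Icc (1:ℝ) 2) (k : ℕ)
    (hk : ∀ n < k, ¬ matchCond α n) :
    (α - 1 ≤ (symDoubling α)^[k] 1 ∧ (symDoubling α)^[k] 1 ≤ 1) ∧
    (α = 1 → (symDoubling α)^[k] 1 = 1) ∧
    (symDoubling α)^[k] (1 - α) = (symDoubling α)^[k] 1 - α := by
  obtain ⟨h1, h2⟩ := hα
  induction k with
  | zero =>
    simp only [Function.iterate_zero, id_eq]
    exact ⟨⟨by linarith, le_refl 1⟩, fun _ => by norm_num, by norm_num⟩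
  | succ k ih =>
    obtain ⟨⟨hxl, hxu⟩, ha1, heq⟩ := ih (fun n hn => hk n (hn.trans (Nat.lt_succ_self k)))
    have hmc := hk k (Nat.lt_succ_self k)
    unfold matchCond at hmc
    set x := (symDoubling α)^[k] 1 with hx
    rw [Function.iterate_succ_apply', Function.iterate_succ_apply', heq]
    rcases le_or_gt x (1/2) with hle | hgt
    · have hα1 : 1 < α := by
        rcases lt_or_eq_of_le h1 with h | h
        · exact h
        · exfalso; have := ha1 h.symm; rw [this] at hle; linarith
      have hS : symDoubling α x = 2*x := by
        unfold symDoubling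
        rw [if_neg (by linarith), if_pos hle]
      have hS' : symDoubling α (x - α) = 2*x - α := by
        unfold symDoubling
        rw [if_pos (by linarith)]
        ring
      refine ⟨⟨?_, ?_⟩, fun h => absurd h (by linarith), ?_⟩
      · rw [hS]; linarith
      · rw [hS]; linarith
      · rw [hS, hS']
    · have hge : α - 1/2 ≤ x := by
        by_contra h
        exact hmc ⟨hgt, by linarith⟩
      have hS : symDoubling α x = 2*x - α := by
        unfold symDoubling
        rw [if_neg (by linarith), if_neg (by linarith)]
      have hS' : symDoubling α (x - α) = 2*x - 2*α := by
        unfold symDoubling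
        rw [if_neg (by linarith), if_pos (by linarith)]
        ring
      refine ⟨⟨?_, ?_⟩, ?_, ?_⟩
      · rw [hS]; linarith
      · rw [hS]; linarith
      · intro h
        have := ha1 h
        rw [hS, this, h]; norm_num
      · rw [hS, hS']; ring

/-- For `α ∈ [1,2]` and all `k < M_α` (i.e. no `n < k` satisfies the matching condition,
since `M_α = inf{n ≥ 0 : 1/2 < S_α^n(1) < α - 1/2} + 1`), one has
`S_α^k(1-α) = S_α^k(1) - α`. -/
theorem stmt1 (α : ℝ) (hα : α ∈ Set.Icc (1:ℝ) 2) (k : ℕ)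
    (hk : ∀ n < k, ¬ matchCond α n) :
    (symDoubling α)^[k] (1 - α) = (symDoubling α)^[k] 1 - α := by
  exact (symDoubling_key α hα k hk).2.2
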